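/- Let p be an odd prime and n a positive integer. For all positive integers j with 1 ≤ 2j+1 < p^{n+1}, the p-adic valuation of the central binomial coefficient C(2j, j) satisfies ord_p C(2j, j) ≤ n − ord_p(2j+1). -/
import Mathlib

/-- For an odd prime `p`, `n ≥ 1` and `j ≥ 1` with `2j+1 < p^{n+1}`, the `p`-adic valuation
of the central binomial coefficient satisfies `ord_p C(2j,j) ≤ n − ord_p(2j+1)`. -/
theorem stmt8 (p : ℕ) (hp : p.Prime) (hodd : Odd p) (n j : ℕ) (hn : 1 ≤ n) (hj : 1 ≤ j)
    (hlt : 2 * j + 1 < p ^ (n + 1)) :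
    padicValNat p ((2 * j).choose j) ≤ n - padicValNat p (2 * j + 1) := by
  haveI : Fact p.Prime := ⟨hp⟩
  set v := padicValNat p (2 * j + 1) with hv
  have hlog : Nat.log p (2 * j) < n + 1 := Nat.log_lt_of_lt_pow (by omega) (by omega)
  rw [padicValNat_choose (by omega : j ≤ 2 * j) hlog]
  have hsub : 2 * j - j = j := by omega
  simp only [hsub]
  calc ((Finset.Ico 1 (n + 1)).filter fun i => p ^ i ≤ j % p ^ i + j % p ^ i).card
      ≤ (Finset.Ico (v + 1) (n + 1)).card := by
        apply Finset.card_le_card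
        intro i hi
        simp only [Finset.mem_filter, Finset.mem_Ico] at hi ⊢
        obtain ⟨⟨h1, h2⟩, hcond⟩ := hi
        refine ⟨?_, h2⟩
        by_contra h
        push_neg at h
        have hdvd : p ^ i ∣ 2 * j + 1 :=
          dvd_trans (pow_dvd_pow p (by omega)) (pow_padicValNat_dvd)
        have hpi : 0 < p ^ i := pow_pos hp.pos i
        have hmod : j % p ^ i < p ^ i := Nat.mod_lt j hpi
        have hdvd2 : p ^ i ∣ 2 * (j % p ^ i) + 1 := by
          have h1' : (2 * j + 1) ≡ 0 [MOD p ^ i] :=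
            (Nat.modEq_zero_iff_dvd).2 hdvd
          have h2' : (2 * (j % p ^ i) + 1) ≡ (2 * j + 1) [MOD p ^ i] :=
            ((Nat.mod_modEq j (p ^ i)).mul_left 2).add_right 1
          exact (Nat.modEq_zero_iff_dvd).1 (h2'.trans h1')
        obtain ⟨c, hc⟩ := hdvd2
        have hc1 : 1 < c := by
          have : p ^ i * 1 < p ^ i * c := by omega
          exact lt_of_mul_lt_mul_left this (Nat.zero_le _)
        have hc2 : c < 2 := by
          have : p ^ i * c < p ^ i * 2 := by omega
          exact lt_of_mul_lt_mul_left this (Nat.zero_le _)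
        omega
    _ = n - v := by rw [Nat.card_Ico]; omega
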